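/- Let L > 0 and x₀ ∈ [0, L/2). For ν < 0, define Ψ(x) = sinh((ν/2)(L/2 - x₀))·sinh((ν/2)(L/2 + x)) for -L/2 ≤ x ≤ x₀ and Ψ(x) = sinh((ν/2)(L/2 + x₀))·sinh((ν/2)(L/2 - x)) for x₀ ≤ x ≤ L/2. Then lim_{ν→-∞} (∫_{x₀}^{L/2} Ψ(x)² dx) / (∫_{-L/2}^{x₀} Ψ(x)² dx) = 1. -/

import Mathlib

open Real MeasureTheory intervalIntegral Filter

private lemma int_sinh_sq (c : ℝ) (hc : c ≠ 0) (p q : ℝ) :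
    ∫ x in p..q, Real.sinh (c*x)^2
      = (Real.sinh (2*c*q) - Real.sinh (2*c*p))/(4*c) - (q - p)/2 := by
  have h : ∀ x : ℝ, HasDerivAt (fun y => Real.sinh (2*c*y)/(4*c) - y/2)
      (Real.sinh (c*x)^2) x := by
    intro x
    have h1 : HasDerivAt (fun y : ℝ => 2*c*y) (2*c) x := by
      simpa using (hasDerivAt_id x).const_mul (2*c)
    have h4 := (((Real.hasDerivAt_sinh (2*c*x)).comp x h1).div_const (4*c)).sub
      ((hasDerivAt_id x).div_const 2)
    refine h4.congr_deriv ?_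
    have hc2 : Real.cosh (2*c*x) = 2 * Real.sinh (c*x)^2 + 1 := by
      rw [show 2*c*x = 2*(c*x) by ring, Real.cosh_two_mul, Real.cosh_sq]
      ring
    rw [hc2]
    field_simp
    ring
  rw [intervalIntegral.integral_eq_sub_of_hasDerivAt (fun x _ => h x)
      (((Real.continuous_sinh.comp (continuous_const.mul continuous_id)).pow 2).intervalIntegrable _ _)]
  ring

private lemma limQ : Tendsto (fun t : ℝ => (Real.sinh t - t)/(Real.sinh (t/2))^2)
    atBot (nhds (-2)) := by
  have hE : Tendsto (fun s : ℝ => Real.exp s) atBot (nhds 0) := Real.tendsto_exp_atBot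
  have hTE : Tendsto (fun s : ℝ => s * Real.exp s) atBot (nhds 0) := by
    have h := (Real.tendsto_pow_mul_exp_neg_atTop_nhds_zero 1).comp tendsto_neg_atBot_atTop
    have h2 := h.neg
    simp only [Function.comp, pow_one, neg_neg, neg_mul, neg_zero] at h2 ⊢
    simpa using h2
  have hQ' : Tendsto (fun s : ℝ => (Real.sinh (2*s) - 2*s)/(Real.sinh s)^2)
      atBot (nhds (-2)) := by
    have hnum : Tendsto (fun s : ℝ => 2*(Real.exp s)^4 - 2 - 8*((s*Real.exp s)*Real.exp s))
        atBot (nhds (2*(0:ℝ)^4 - 2 - 8*(0*0))) :=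
      (((hE.pow 4).const_mul 2).sub tendsto_const_nhds).sub ((hTE.mul hE).const_mul 8)
    have hden : Tendsto (fun s : ℝ => (Real.exp s)^4 - 2*(Real.exp s)^2 + 1)
        atBot (nhds ((0:ℝ)^4 - 2*(0:ℝ)^2 + 1)) :=
      ((hE.pow 4).sub ((hE.pow 2).const_mul 2)).add tendsto_const_nhds
    norm_num at hnum hden
    have hdiv := hnum.div hden (by norm_num)
    norm_num at hdiv
    refine hdiv.congr' ?_
    filter_upwards [eventually_lt_atBot (0:ℝ)] with s hs
    have hs0 : s ≠ 0 := hs.ne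
    have hsinh : Real.sinh s ≠ 0 := Real.sinh_ne_zero.mpr hs0
    have he : Real.exp s ≠ 0 := Real.exp_ne_zero s
    have h1 : Real.exp s - (Real.exp s)⁻¹ ≠ 0 := by
      intro h
      apply hsinh
      rw [Real.sinh_eq, Real.exp_neg, h, zero_div]
    have hlt : Real.exp s < 1 := Real.exp_lt_one_iff.mpr hs
    have hpos : 0 < Real.exp s := Real.exp_pos s
    have he2 : (Real.exp s)^2 < 1 := by nlinarith
    have h2 : (0:ℝ) < (Real.exp s)^4 - 2*(Real.exp s)^2 + 1 := by nlinarith [mul_pos (sub_pos.mpr he2) (sub_pos.mpr he2)]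
    rw [Real.sinh_eq, Real.sinh_eq, Real.exp_neg, Real.exp_neg,
      show (2:ℝ)*s = s + s by ring, Real.exp_add]
    rw [Pi.div_apply, div_eq_div_iff h2.ne' (pow_ne_zero 2 (div_ne_zero h1 two_ne_zero))]
    field_simp
    ring
  have hhalf : Tendsto (fun t : ℝ => t/2) atBot atBot := by
    simpa [div_eq_mul_inv] using tendsto_id.atBot_mul_const' (r := (2:ℝ)⁻¹) (by norm_num)
  refine (hQ'.comp hhalf).congr fun t => ?_
  simp only [Function.comp]
  rw [show 2*(t/2) = t by ring]

theorem stmt_11 (L x₀ : ℝ) (hL : 0 < L) (hx₀ : 0 ≤ x₀) (hx₀' : x₀ < L/2)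
    (Ψ : ℝ → ℝ → ℝ)
    (hΨ : ∀ ν x, Ψ ν x = if x ≤ x₀ then
        Real.sinh (ν/2*(L/2 - x₀)) * Real.sinh (ν/2*(L/2 + x))
      else
        Real.sinh (ν/2*(L/2 + x₀)) * Real.sinh (ν/2*(L/2 - x))) :
    Tendsto (fun ν : ℝ =>
        (∫ x in x₀..(L/2), (Ψ ν x)^2) / (∫ x in (-(L/2))..x₀, (Ψ ν x)^2))
      atBot (nhds 1) := by
  set a : ℝ := L/2 - x₀ with ha_def
  set b : ℝ := L/2 + x₀ with hb_def
  have ha : 0 < a := by simp only [ha_def]; linarith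
  have hb : 0 < b := by simp only [hb_def]; linarith
  have hnum : ∀ ν : ℝ, ν ≠ 0 → (∫ x in x₀..(L/2), (Ψ ν x)^2)
      = Real.sinh (ν*b/2)^2 * ((Real.sinh (ν*a) - ν*a)/(2*ν)) := by
    intro ν hν
    have h1 : (∫ x in x₀..(L/2), (Ψ ν x)^2)
        = ∫ x in x₀..(L/2), Real.sinh (ν/2*(L/2+x₀))^2 * Real.sinh (ν/2*(L/2 - x))^2 := by
      apply intervalIntegral.integral_congr_ae
      filter_upwards with x hx
      rw [Set.uIoc_of_le hx₀'.le] at hx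
      rw [hΨ, if_neg (not_le.mpr hx.1)]
      ring
    rw [h1, intervalIntegral.integral_const_mul,
      intervalIntegral.integral_comp_sub_left (fun y => Real.sinh (ν/2*y)^2) (L/2),
      sub_self, int_sinh_sq (ν/2) (div_ne_zero hν two_ne_zero),
      show 2*(ν/2)*(L/2 - x₀) = ν*a by rw [ha_def]; ring,
      show 2*(ν/2)*(0:ℝ) = 0 by ring, Real.sinh_zero,
      show ν/2*(L/2+x₀) = ν*b/2 by rw [hb_def]; ring]
    field_simp
    ring
  have hden : ∀ ν : ℝ, ν ≠ 0 → (∫ x in (-(L/2))..x₀, (Ψ ν x)^2)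
      = Real.sinh (ν*a/2)^2 * ((Real.sinh (ν*b) - ν*b)/(2*ν)) := by
    intro ν hν
    have h1 : (∫ x in (-(L/2))..x₀, (Ψ ν x)^2)
        = ∫ x in (-(L/2))..x₀, Real.sinh (ν/2*(L/2-x₀))^2 * Real.sinh (ν/2*(L/2 + x))^2 := by
      apply intervalIntegral.integral_congr_ae
      filter_upwards with x hx
      rw [Set.uIoc_of_le (by linarith : -(L/2) ≤ x₀)] at hx
      rw [hΨ, if_pos hx.2]
      ring
    rw [h1, intervalIntegral.integral_const_mul,
      intervalIntegral.integral_comp_add_left (fun y => Real.sinh (ν/2*y)^2) (L/2),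
      show L/2 + -(L/2) = (0:ℝ) by ring,
      int_sinh_sq (ν/2) (div_ne_zero hν two_ne_zero),
      show 2*(ν/2)*(L/2 + x₀) = ν*b by rw [hb_def]; ring,
      show 2*(ν/2)*(0:ℝ) = 0 by ring, Real.sinh_zero,
      show ν/2*(L/2-x₀) = ν*a/2 by rw [ha_def]; ring]
    field_simp
    ring
  have hA : Tendsto (fun ν : ℝ => (Real.sinh (ν*a) - ν*a)/(Real.sinh (ν*a/2))^2)
      atBot (nhds (-2)) := by
    have h := limQ.comp (tendsto_id.atBot_mul_const' ha)
    exact h.congr fun ν => by simp [Function.comp]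
  have hB : Tendsto (fun ν : ℝ => (Real.sinh (ν*b) - ν*b)/(Real.sinh (ν*b/2))^2)
      atBot (nhds (-2)) := by
    have h := limQ.comp (tendsto_id.atBot_mul_const' hb)
    exact h.congr fun ν => by simp [Function.comp]
  have hlim : Tendsto (fun ν : ℝ =>
      ((Real.sinh (ν*a) - ν*a)/(Real.sinh (ν*a/2))^2)
        / ((Real.sinh (ν*b) - ν*b)/(Real.sinh (ν*b/2))^2)) atBot (nhds 1) := by
    have := hA.div hB (by norm_num)
    norm_num at this
    exact this
  refine hlim.congr' ?_
  filter_upwards [eventually_lt_atBot (0:ℝ)] with ν hν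
  have hν0 : ν ≠ 0 := hν.ne
  rw [hnum ν hν0, hden ν hν0]
  have hsa : Real.sinh (ν*a/2) ≠ 0 := Real.sinh_ne_zero.mpr (by
    have : ν*a < 0 := mul_neg_of_neg_of_pos hν ha
    intro h; rw [div_eq_zero_iff] at h; rcases h with h | h <;> linarith)
  have hsb : Real.sinh (ν*b/2) ≠ 0 := Real.sinh_ne_zero.mpr (by
    have : ν*b < 0 := mul_neg_of_neg_of_pos hν hb
    intro h; rw [div_eq_zero_iff] at h; rcases h with h | h <;> linarith)
  have hYa : Real.sinh (ν*a) - ν*a ≠ 0 := by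
    have : Real.sinh (ν*a) < ν*a := Real.sinh_lt_self_iff.mpr (mul_neg_of_neg_of_pos hν ha)
    linarith
  have hYb : Real.sinh (ν*b) - ν*b ≠ 0 := by
    have : Real.sinh (ν*b) < ν*b := Real.sinh_lt_self_iff.mpr (mul_neg_of_neg_of_pos hν hb)
    linarith
  field_simp
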